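/- For vectors x ∈ ℝⁿ, the dual norm of the ℓ²-norm of the r largest-magnitude entries, i.e., of x ↦ sqrt(Σ_{i=1}^r |x|_{[i]}²) where |x|_{[1]} ≥ … ≥ |x|_{[n]} are the sorted absolute values, equals the k-support norm with k = r, namely ‖x‖ₖ^{sp} = inf { Σ_g ‖v_g‖₂ : Σ_g v_g = x, each v_g has at most k nonzero entries }. -/

import Mathlib

open BigOperators Finset

/-- The absolute values of the entries of `x ∈ ℝⁿ`, sorted in nonincreasing order,
0-indexed: `svVec x 0 = |x|_[1] ≥ svVec x 1 = |x|_[2] ≥ …`. -/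
noncomputable def svVec {n : ℕ} (x : Fin n → ℝ) (i : ℕ) : ℝ :=
  (((List.ofFn fun j : Fin n => |x j|).mergeSort (fun a b => decide (a ≥ b))).getD i 0)

/-- The `top-r ℓ²` norm: the ℓ² norm of the `r` largest-magnitude entries. -/
noncomputable def topEll2 {n : ℕ} (r : ℕ) (x : Fin n → ℝ) : ℝ :=
  Real.sqrt (∑ i ∈ Finset.range r, svVec x i ^ 2)

/-- Euclidean (ℓ²) norm on `ℝⁿ`. -/
noncomputable def euclN {n : ℕ} (x : Fin n → ℝ) : ℝ := Real.sqrt (∑ i, x i ^ 2)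

/-- ℓ¹ norm on `ℝⁿ`. -/
noncomputable def l1N {n : ℕ} (x : Fin n → ℝ) : ℝ := ∑ i, |x i|

/-- Number of nonzero entries of `x`. -/
noncomputable def suppCard {n : ℕ} (x : Fin n → ℝ) : ℕ :=
  (Finset.univ.filter fun i => x i ≠ 0).card

/-- The `k`-support norm: infimum of `Σ_g ‖v_g‖₂` over all finite decompositions
`x = Σ_g v_g` where each `v_g` has at most `k` nonzero entries. -/
noncomputable def ksup {n : ℕ} (k : ℕ) (x : Fin n → ℝ) : ℝ :=
  sInf {c : ℝ | ∃ (N : ℕ) (v : Fin N → (Fin n → ℝ)),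
    (∀ g, suppCard (v g) ≤ k) ∧ (∑ g, v g) = x ∧ c = ∑ g, euclN (v g)}

/-- Dual norm on `ℝⁿ` with respect to the standard inner product. -/
noncomputable def dualVec {n : ℕ} (ν : (Fin n → ℝ) → ℝ) (x : Fin n → ℝ) : ℝ :=
  sSup {c : ℝ | ∃ y, ν y ≤ 1 ∧ c = ∑ i, x i * y i}

/-- The sorting permutation: svVec equals the descending rearrangement of |y|. -/
lemma svVec_eq_sorted {n : ℕ} (y : Fin n → ℝ) (i : Fin n) :
    svVec y (i : ℕ) = |y (Tuple.sort (fun j => |y j|) (Fin.rev i))| := by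
  set f : Fin n → ℝ := fun j => |y j| with hf
  set σ : Equiv.Perm (Fin n) := Tuple.sort f with hσ
  set L : List ℝ := (List.ofFn f).mergeSort (fun a b => decide (a ≥ b)) with hL
  set M : List ℝ := List.ofFn (fun i : Fin n => f (σ (Fin.rev i))) with hM
  have hLM : L = M := by
    apply fun hp h1 h2 => List.Perm.eq_of_pairwise (le := fun a b : ℝ => a ≥ b)
      (fun a b _ _ h h' => le_antisymm h' h) h1 h2 hp
    · refine (List.mergeSort_perm _ _).trans ?_
      have h1 : (List.ofFn ((f ∘ σ) ∘ (Fin.revPerm : Equiv.Perm (Fin n)))).Perm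
          (List.ofFn (f ∘ σ)) := Equiv.Perm.ofFn_comp_perm Fin.revPerm (f ∘ σ)
      have h2 : (List.ofFn (f ∘ σ)).Perm (List.ofFn f) := Equiv.Perm.ofFn_comp_perm σ f
      exact ((h1.trans h2).symm).trans (by rfl)
    · have := List.pairwise_mergeSort (le := fun a b : ℝ => decide (a ≥ b))
        (fun a b c hab hbc => by simp only [decide_eq_true_eq] at *; exact le_trans hbc hab)
        (fun a b => by simp only [Bool.or_eq_true, decide_eq_true_eq]; exact le_total b a)
        (List.ofFn f)
      exact this.imp (fun h => by simpa using h)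
    · rw [hM, List.pairwise_iff_get]
      intro i j hij
      simp only [List.get_ofFn]
      have hmono := Tuple.monotone_sort f
      have : Fin.rev (Fin.cast List.length_ofFn j) ≤ Fin.rev (Fin.cast List.length_ofFn i) := by
        apply Fin.rev_le_rev.mpr
        rw [Fin.le_def]
        simp only [Fin.coe_cast]
        exact le_of_lt hij
      exact hmono this
  have hlen : i.1 < M.length := by simp [hM]
  rw [svVec, ← hL, hLM, List.getD_eq_getElem _ _ hlen]
  simp [hM, List.getElem_ofFn]
  rfl

lemma svVec_zero_of_ge {n : ℕ} (y : Fin n → ℝ) {m : ℕ} (hm : n ≤ m) : svVec y m = 0 := by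
  apply List.getD_eq_default
  simpa using hm

lemma svVec_nonneg {n : ℕ} (y : Fin n → ℝ) (m : ℕ) : 0 ≤ svVec y m := by
  rcases lt_or_ge m n with h | h
  · rw [show m = ((⟨m, h⟩ : Fin n) : ℕ) from rfl, svVec_eq_sorted]
    exact abs_nonneg _
  · rw [svVec_zero_of_ge y h]

lemma svVec_antitone {n : ℕ} (y : Fin n → ℝ) {i j : ℕ} (hij : i ≤ j) :
    svVec y j ≤ svVec y i := by
  rcases lt_or_ge j n with hj | hj
  · have hi : i < n := lt_of_le_of_lt hij hj
    rw [show j = ((⟨j, hj⟩ : Fin n) : ℕ) from rfl, svVec_eq_sorted]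
    rw [show i = ((⟨i, hi⟩ : Fin n) : ℕ) from rfl, svVec_eq_sorted]
    have h' : (⟨i, hi⟩ : Fin n) ≤ ⟨j, hj⟩ := Fin.mk_le_mk.mpr hij
    exact Tuple.monotone_sort (fun j => |y j|) (Fin.rev_le_rev.mpr h')
  · rw [svVec_zero_of_ge y hj]; exact svVec_nonneg y i

lemma sum_sq_svVec {n : ℕ} (y : Fin n → ℝ) :
    ∑ i ∈ Finset.range n, svVec y i ^ 2 = ∑ i, (y i) ^ 2 := by
  rw [Finset.sum_range fun i => svVec y i ^ 2]
  have : ∀ i : Fin n, svVec y (i : ℕ) ^ 2 = (fun j => (y j)^2) ((Tuple.sort (fun j => |y j|)) (Fin.rev i)) := by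
    intro i; rw [svVec_eq_sorted]; simp [sq_abs]
  rw [Fintype.sum_congr _ _ this]
  exact Equiv.sum_comp (Fin.revPerm.trans (Tuple.sort (fun j => |y j|))) (fun j => (y j)^2)

/-- Sum over an initial segment dominates sum over any set of that cardinality. -/
lemma sum_sq_sv_le {n r : ℕ} (y : Fin n → ℝ) (T : Finset (Fin n)) (hT : T.card ≤ r) :
    ∑ j ∈ T, svVec y (j : ℕ) ^ 2 ≤ ∑ i ∈ Finset.range r, svVec y i ^ 2 := by
  classical
  set t := T.card with ht
  have e := T.orderIsoOfFin (rfl : T.card = t)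
  have hstrict : StrictMono fun i : Fin t => ((e i : Fin n) : ℕ) := by
    intro a b hab
    exact_mod_cast (Subtype.coe_lt_coe.mpr (e.strictMono hab))
  have hle : ∀ i : Fin t, (i : ℕ) ≤ ((e i : Fin n) : ℕ) := by
    intro i
    have : ∀ m : ℕ, ∀ hm : m < t, m ≤ ((e ⟨m, hm⟩ : Fin n) : ℕ) := by
      intro m
      induction m with
      | zero => intro _; exact Nat.zero_le _
      | succ k ih =>
        intro hm
        have hk : k < t := Nat.lt_of_succ_lt hm
        have h1 := ih hk
        have h2 : ((e ⟨k, hk⟩ : Fin n) : ℕ) < ((e ⟨k+1, hm⟩ : Fin n) : ℕ) :=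
          hstrict (by rw [Fin.lt_def]; exact Nat.lt_succ_self k)
        omega
    exact this i i.2
  have h1 : ∑ j ∈ T, svVec y (j : ℕ) ^ 2 = ∑ i : Fin t, svVec y ((e i : Fin n) : ℕ) ^ 2 := by
    rw [← Finset.sum_attach T (fun j => svVec y (j : ℕ) ^ 2)]
    exact (Equiv.sum_comp e.toEquiv (fun j : T => svVec y ((j : Fin n) : ℕ) ^ 2)).symm
  rw [h1]
  have h2 : ∑ i : Fin t, svVec y ((e i : Fin n) : ℕ) ^ 2 ≤ ∑ i : Fin t, svVec y (i : ℕ) ^ 2 := by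
    apply Finset.sum_le_sum
    intro i _
    have := svVec_antitone y (hle i)
    exact pow_le_pow_left₀ (svVec_nonneg y _) this 2
  refine le_trans h2 ?_
  rw [Fin.sum_univ_eq_sum_range (fun i => svVec y i ^ 2) t]
  apply Finset.sum_le_sum_of_subset_of_nonneg
  · exact Finset.range_subset_range.mpr hT
  · intro i _ _; positivity

/-- Lemma A: sum of squares over any small set is at most the top-r sum. -/
lemma sum_sq_le_top {n r : ℕ} (y : Fin n → ℝ) (S : Finset (Fin n)) (hS : S.card ≤ r) :
    ∑ i ∈ S, (y i) ^ 2 ≤ ∑ i ∈ Finset.range r, svVec y i ^ 2 := by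
  classical
  set σ := Tuple.sort (fun j => |y j|) with hσ
  set π : Fin n → Fin n := fun i => Fin.rev (σ.symm i) with hπ
  have hinj : Function.Injective π := by
    intro a b hab
    have := Fin.rev_injective hab
    exact σ.symm.injective this
  have key : ∀ i ∈ S, (y i)^2 = svVec y ((π i : Fin n) : ℕ) ^ 2 := by
    intro i _
    rw [svVec_eq_sorted]
    simp [hπ, hσ, sq_abs]
  rw [Finset.sum_congr rfl key]
  rw [← Finset.sum_image (s := S) (g := π) (f := fun j : Fin n => svVec y (j : ℕ) ^ 2)
      (fun a _ b _ h => hinj h)]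
  exact sum_sq_sv_le y _ (le_trans (le_of_eq (Finset.card_image_of_injective S hinj)) hS)

/-- Lemma B: the top-r sum is attained by an actual subset of coordinates. -/
lemma exists_attaining_set {n r : ℕ} (y : Fin n → ℝ) (hr2 : r ≤ n) :
    ∃ S : Finset (Fin n), S.card ≤ r ∧ ∑ i ∈ S, (y i) ^ 2 = ∑ i ∈ Finset.range r, svVec y i ^ 2 := by
  classical
  set σ := Tuple.sort (fun j => |y j|) with hσ
  set g : Fin r → Fin n := fun i => σ (Fin.rev (Fin.castLE hr2 i)) with hg
  have hinj : Function.Injective g := by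
    intro a b hab
    have h1 := σ.injective hab
    have h2 := Fin.rev_injective h1
    exact Fin.castLE_injective hr2 h2
  refine ⟨Finset.image g Finset.univ, ?_, ?_⟩
  · rw [Finset.card_image_of_injective _ hinj]
    simp
  · rw [Finset.sum_image (fun a _ b _ h => hinj h)]
    have : ∀ i : Fin r, (y (g i))^2 = svVec y ((Fin.castLE hr2 i : Fin n) : ℕ) ^ 2 := by
      intro i
      rw [svVec_eq_sorted]
      simp [hg, hσ, sq_abs]
    rw [Finset.sum_congr rfl (fun i _ => this i)]
    simp only [Fin.coe_castLE]
    exact Fin.sum_univ_eq_sum_range (fun i => svVec y i ^ 2) r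

lemma euclN_nonneg {n : ℕ} (x : Fin n → ℝ) : 0 ≤ euclN x := Real.sqrt_nonneg _

lemma topEll2_nonneg {n r : ℕ} (x : Fin n → ℝ) : 0 ≤ topEll2 r x := Real.sqrt_nonneg _

lemma euclN_smul {n : ℕ} (c : ℝ) (v : Fin n → ℝ) : euclN (c • v) = |c| * euclN v := by
  unfold euclN
  have : ∀ i, (c • v) i ^ 2 = c ^ 2 * v i ^ 2 := by
    intro i; simp [mul_pow]
  rw [Finset.sum_congr rfl (fun i _ => this i), ← Finset.mul_sum,
    Real.sqrt_mul (sq_nonneg c), Real.sqrt_sq_eq_abs]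

lemma suppCard_smul_le {n : ℕ} (c : ℝ) (v : Fin n → ℝ) : suppCard (c • v) ≤ suppCard v := by
  apply Finset.card_le_card
  intro i hi
  simp only [Finset.mem_filter, Finset.mem_univ, true_and] at *
  intro h
  simp [h] at hi

lemma abs_le_euclN {n : ℕ} (v : Fin n → ℝ) (i : Fin n) : |v i| ≤ euclN v := by
  rw [← Real.sqrt_sq_eq_abs]
  apply Real.sqrt_le_sqrt
  exact Finset.single_le_sum (f := fun j => v j ^ 2) (fun j _ => sq_nonneg _) (Finset.mem_univ i)

lemma topEll2_le_euclN {n r : ℕ} (hr2 : r ≤ n) (y : Fin n → ℝ) : topEll2 r y ≤ euclN y := by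
  unfold topEll2 euclN
  apply Real.sqrt_le_sqrt
  rw [← sum_sq_svVec y]
  apply Finset.sum_le_sum_of_subset_of_nonneg (Finset.range_subset_range.mpr hr2)
  intro i _ _; positivity

/-- Cauchy–Schwarz pairing bound for sparse v. -/
lemma pairing_le {n r : ℕ} (v y : Fin n → ℝ) (hv : suppCard v ≤ r) :
    ∑ i, v i * y i ≤ euclN v * topEll2 r y := by
  classical
  set S : Finset (Fin n) := Finset.univ.filter (fun i => v i ≠ 0) with hSdef
  have h1 : ∑ i, v i * y i = ∑ i ∈ S, v i * y i := by
    rw [← Finset.sum_filter_add_sum_filter_not Finset.univ (fun i => v i ≠ 0)]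
    have : ∑ i ∈ Finset.univ.filter (fun i => ¬ v i ≠ 0), v i * y i = 0 := by
      apply Finset.sum_eq_zero
      intro i hi
      simp only [Finset.mem_filter, not_not] at hi
      rw [hi.2, zero_mul]
    rw [this, add_zero]
  have h2 : (∑ i ∈ S, v i * y i) ^ 2 ≤ (∑ i ∈ S, v i ^ 2) * ∑ i ∈ S, y i ^ 2 :=
    Finset.sum_mul_sq_le_sq_mul_sq S v y
  have hv2 : ∑ i ∈ S, v i ^ 2 = ∑ i, v i ^ 2 := by
    apply Finset.sum_subset (Finset.subset_univ S)
    intro i _ hi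
    simp only [hSdef, Finset.mem_filter, Finset.mem_univ, true_and, not_not] at hi
    rw [hi]; ring
  have h3 : ∑ i ∈ S, y i ^ 2 ≤ ∑ i ∈ Finset.range r, svVec y i ^ 2 := sum_sq_le_top y S hv
  calc ∑ i, v i * y i = ∑ i ∈ S, v i * y i := h1
    _ ≤ |∑ i ∈ S, v i * y i| := le_abs_self _
    _ = Real.sqrt ((∑ i ∈ S, v i * y i) ^ 2) := (Real.sqrt_sq_eq_abs _).symm
    _ ≤ Real.sqrt ((∑ i, v i ^ 2) * ∑ i ∈ Finset.range r, svVec y i ^ 2) := by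
        apply Real.sqrt_le_sqrt
        refine le_trans h2 ?_
        rw [hv2]
        apply mul_le_mul_of_nonneg_left h3
        positivity
    _ = euclN v * topEll2 r y := by
        rw [Real.sqrt_mul (by positivity)]; rfl

/-- Attainment: the top-r value is an inner product with an admissible sparse vector. -/
lemma exists_attain {n r : ℕ} (hr2 : r ≤ n) (z : Fin n → ℝ) :
    ∃ v : Fin n → ℝ, suppCard v ≤ r ∧ euclN v ≤ 1 ∧ ∑ i, v i * z i = topEll2 r z := by
  classical
  obtain ⟨S, hScard, hSsum⟩ := exists_attaining_set z hr2
  set t := topEll2 r z with ht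
  rcases eq_or_lt_of_le (topEll2_nonneg (r := r) z) with h0 | h0
  · refine ⟨0, ?_, ?_, ?_⟩
    · simp [suppCard]
    · simp [euclN]
    · show ∑ i, (0:Fin n → ℝ) i * z i = t
      simp [ht, ← h0]
  · set v : Fin n → ℝ := fun i => if i ∈ S then z i / t else 0 with hv
    have hSz : ∑ i ∈ S, z i ^ 2 = t ^ 2 := by
      rw [hSsum, ht, topEll2, Real.sq_sqrt]; positivity
    refine ⟨v, ?_, ?_, ?_⟩
    · unfold suppCard
      refine le_trans (Finset.card_le_card ?_) hScard
      intro i hi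
      simp only [Finset.mem_filter, Finset.mem_univ, true_and, hv] at hi
      by_contra hmem
      simp [hmem] at hi
    · have hveq : ∑ i, v i ^ 2 = 1 := by
        rw [← Finset.sum_filter_add_sum_filter_not Finset.univ (fun i => i ∈ S)]
        have e1 : ∑ i ∈ Finset.univ.filter (fun i => i ∈ S), v i ^ 2
            = ∑ i ∈ S, (z i / t) ^ 2 := by
          rw [Finset.filter_mem_eq_inter, Finset.univ_inter]
          apply Finset.sum_congr rfl
          intro i hi; simp [hv, hi]
        have e2 : ∑ i ∈ Finset.univ.filter (fun i => ¬ i ∈ S), v i ^ 2 = 0 := by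
          apply Finset.sum_eq_zero
          intro i hi
          simp only [Finset.mem_filter] at hi
          simp [hv, hi.2]
        rw [e1, e2, add_zero]
        have : ∑ i ∈ S, (z i / t) ^ 2 = (∑ i ∈ S, z i ^ 2) / t ^ 2 := by
          rw [Finset.sum_div]
          apply Finset.sum_congr rfl
          intro i _; ring
        rw [this, hSz, div_self (by positivity)]
      rw [euclN, hveq, Real.sqrt_one]
    · have e1 : ∑ i, v i * z i = ∑ i ∈ S, z i ^ 2 / t := by
        rw [← Finset.sum_filter_add_sum_filter_not Finset.univ (fun i => i ∈ S)]
        have e2 : ∑ i ∈ Finset.univ.filter (fun i => ¬ i ∈ S), v i * z i = 0 := by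
          apply Finset.sum_eq_zero
          intro i hi
          simp only [Finset.mem_filter] at hi
          simp [hv, hi.2]
        rw [e2, add_zero, Finset.filter_mem_eq_inter, Finset.univ_inter]
        apply Finset.sum_congr rfl
        intro i hi
        simp only [hv, if_pos hi]
        ring
      rw [e1, ← Finset.sum_div, hSz, sq]
      rw [mul_div_assoc, div_self (by rw [ht]; positivity), mul_one]

section CompactHull

variable {E : Type*} [NormedAddCommGroup E] [NormedSpace ℝ E]

lemma convexJoin_eq_image (s t : Set E) :
    convexJoin ℝ s t =
      (fun p : ℝ × E × E => (1 - p.1) • p.2.1 + p.1 • p.2.2) ''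
        (Set.Icc (0:ℝ) 1 ×ˢ s ×ˢ t) := by
  ext z
  simp only [convexJoin, Set.mem_iUnion, segment_eq_image, Set.mem_image, Set.mem_prod,
    Set.mem_Icc, Prod.exists]
  constructor
  · rintro ⟨a, ha, b, hb, θ, hθ, rfl⟩
    exact ⟨θ, a, b, ⟨hθ, ha, hb⟩, rfl⟩
  · rintro ⟨θ, a, b, ⟨hθ, ha, hb⟩, rfl⟩
    exact ⟨a, ha, b, hb, θ, hθ, rfl⟩

lemma isCompact_convexJoin {s t : Set E} (hs : IsCompact s) (ht : IsCompact t) :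
    IsCompact (convexJoin ℝ s t) := by
  rw [convexJoin_eq_image]
  apply IsCompact.image (isCompact_Icc.prod (hs.prod ht))
  fun_prop

lemma isCompact_convexHull_of_finite_union {ι : Type*} [DecidableEq ι] (s : Finset ι)
    (hs : s.Nonempty) (B : ι → Set E) (hcpt : ∀ i, IsCompact (B i))
    (hcvx : ∀ i, Convex ℝ (B i)) (hne : ∀ i, (B i).Nonempty) :
    IsCompact (convexHull ℝ (⋃ i ∈ s, B i)) := by
  induction hs using Finset.Nonempty.cons_induction with
  | singleton a =>
    simp only [Finset.mem_singleton, Set.iUnion_iUnion_eq_left]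
    rw [(hcvx a).convexHull_eq]
    exact hcpt a
  | cons a s ha hs ih =>
    have hunion : (⋃ i ∈ Finset.cons a s ha, B i) = B a ∪ ⋃ i ∈ s, B i := by
      rw [Finset.cons_eq_insert, Finset.set_biUnion_insert]
    rw [hunion, convexHull_union (hne a) ?_, (hcvx a).convexHull_eq]
    · exact isCompact_convexJoin (hcpt a) ih
    · obtain ⟨i, hi⟩ := hs
      obtain ⟨z, hz⟩ := hne i
      exact ⟨z, Set.mem_biUnion hi hz⟩

end CompactHull

lemma euclN_eq_norm {n : ℕ} (v : Fin n → ℝ) :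
    euclN v = ‖(EuclideanSpace.equiv (Fin n) ℝ).symm v‖ := by
  rw [EuclideanSpace.norm_eq]
  simp [euclN, Real.norm_eq_abs, sq_abs]

lemma continuous_euclN {n : ℕ} : Continuous (euclN (n := n)) := by
  have : euclN (n := n) = fun v => ‖(EuclideanSpace.equiv (Fin n) ℝ).symm v‖ := by
    funext v; exact euclN_eq_norm v
  rw [this]
  exact continuous_norm.comp (EuclideanSpace.equiv (Fin n) ℝ).symm.continuous

lemma euclN_add_le {n : ℕ} (v w : Fin n → ℝ) : euclN (v + w) ≤ euclN v + euclN w := by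
  rw [euclN_eq_norm, euclN_eq_norm, euclN_eq_norm, map_add]
  exact norm_add_le _ _

lemma euclN_zero {n : ℕ} : euclN (0 : Fin n → ℝ) = 0 := by simp [euclN]

/-- The compact convex hull of the sparse-atom set. -/
lemma atoms_hull_isCompact {n r : ℕ} :
    IsCompact (convexHull ℝ {v : Fin n → ℝ | suppCard v ≤ r ∧ euclN v ≤ 1}) := by
  classical
  set B : Finset (Fin n) → Set (Fin n → ℝ) :=
    fun S => {v | (∀ i ∉ S, v i = 0) ∧ euclN v ≤ 1} with hB
  set 𝒮 : Finset (Finset (Fin n)) := Finset.univ.filter (fun S => S.card ≤ r) with h𝒮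
  have hAeq : {v : Fin n → ℝ | suppCard v ≤ r ∧ euclN v ≤ 1} = ⋃ S ∈ 𝒮, B S := by
    ext v
    simp only [Set.mem_setOf_eq, Set.mem_iUnion, h𝒮, Finset.mem_filter, Finset.mem_univ,
      true_and, hB]
    constructor
    · rintro ⟨h1, h2⟩
      refine ⟨Finset.univ.filter (fun i => v i ≠ 0), h1, ?_, h2⟩
      intro i hi
      by_contra h
      exact hi (Finset.mem_filter.mpr ⟨Finset.mem_univ i, h⟩)
    · rintro ⟨S, hS, h1, h2⟩
      refine ⟨le_trans ?_ hS, h2⟩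
      apply Finset.card_le_card
      intro i hi
      simp only [Finset.mem_filter, Finset.mem_univ, true_and] at hi
      by_contra h
      exact hi (h1 i h)
  rw [hAeq]
  apply isCompact_convexHull_of_finite_union 𝒮 ⟨∅, by simp [h𝒮]⟩ B
  · intro S
    rw [Metric.isCompact_iff_isClosed_bounded]
    constructor
    · have h1 : IsClosed {v : Fin n → ℝ | ∀ i ∉ S, v i = 0} := by
        have he : {v : Fin n → ℝ | ∀ i ∉ S, v i = 0}
            = ⋂ i ∈ ({i | i ∉ S} : Set (Fin n)), {v : Fin n → ℝ | v i = 0} := by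
          ext v; simp
        rw [he]
        exact isClosed_biInter (fun i _ => isClosed_eq (continuous_apply i) continuous_const)
      have h2 : IsClosed {v : Fin n → ℝ | euclN v ≤ 1} :=
        isClosed_le continuous_euclN continuous_const
      exact h1.inter h2
    · apply Bornology.IsBounded.subset (Metric.isBounded_closedBall (x := (0 : Fin n → ℝ)) (r := 1))
      intro v hv
      rw [Metric.mem_closedBall, dist_zero_right]
      rw [pi_norm_le_iff_of_nonneg zero_le_one]
      intro i
      rw [Real.norm_eq_abs]
      exact le_trans (abs_le_euclN v i) hv.2
  · intro S
    intro v hv w hw a b ha hb hab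
    constructor
    · intro i hi
      have : v i = 0 := hv.1 i hi
      have hwi : w i = 0 := hw.1 i hi
      simp [this, hwi]
    · calc euclN (a • v + b • w) ≤ euclN (a • v) + euclN (b • w) := euclN_add_le _ _
        _ = |a| * euclN v + |b| * euclN w := by rw [euclN_smul, euclN_smul]
        _ ≤ a * 1 + b * 1 := by
            apply add_le_add
            · rw [abs_of_nonneg ha]
              exact mul_le_mul_of_nonneg_left hv.2 ha
            · rw [abs_of_nonneg hb]
              exact mul_le_mul_of_nonneg_left hw.2 hb
        _ = 1 := by rw [mul_one, mul_one, hab]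
  · intro S
    exact ⟨0, fun i _ => rfl, by rw [euclN_zero]; exact zero_le_one⟩

lemma clm_repr {n : ℕ} (f : (Fin n → ℝ) →L[ℝ] ℝ) (y : Fin n → ℝ) :
    f y = ∑ i, y i * f (Pi.single i 1) := by
  classical
  have hy : y = ∑ i, y i • (Pi.single i (1:ℝ) : Fin n → ℝ) := by
    have h1 : ∀ i, y i • (Pi.single i (1:ℝ) : Fin n → ℝ) = Pi.single i (y i) := by
      intro i
      funext j
      rcases eq_or_ne j i with h | h <;> simp [Pi.single_apply, h]
    rw [Finset.sum_congr rfl (fun i _ => h1 i), Finset.univ_sum_single]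
  conv_lhs => rw [hy]
  rw [map_sum]
  apply Finset.sum_congr rfl
  intro i _
  rw [map_smul, smul_eq_mul]

lemma euclN_single {n : ℕ} (i : Fin n) (c : ℝ) : euclN (Pi.single i c : Fin n → ℝ) = |c| := by
  unfold euclN
  rw [Finset.sum_eq_single i]
  · simp [Real.sqrt_sq_eq_abs]
  · intro j _ hj
    simp [Pi.single_apply, hj]
  · intro h
    exact absurd (Finset.mem_univ i) h

lemma sum_single_pair {n : ℕ} (x : Fin n → ℝ) (i : Fin n) (c : ℝ) :
    ∑ j, x j * (Pi.single i c : Fin n → ℝ) j = x i * c := by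
  rw [Finset.sum_eq_single i]
  · simp
  · intro j _ hj
    simp [Pi.single_apply, hj]
  · intro h
    exact absurd (Finset.mem_univ i) h

/-- the dual norm of the `top-r ℓ²` norm is the `k`-support norm with `k = r`. -/
theorem dual_topEll2_eq_ksup {n r : ℕ} (hr1 : 1 ≤ r) (hr2 : r ≤ n) (x : Fin n → ℝ) :
    dualVec (topEll2 r) x = ksup r x := by
  classical
  set D : Set ℝ := {c | ∃ y, topEll2 r y ≤ 1 ∧ c = ∑ i, x i * y i} with hD
  set K : Set ℝ := {c : ℝ | ∃ (N : ℕ) (v : Fin N → (Fin n → ℝ)),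
    (∀ g, suppCard (v g) ≤ r) ∧ (∑ g, v g) = x ∧ c = ∑ g, euclN (v g)} with hK
  have h0D : (0:ℝ) ∈ D := by
    refine ⟨0, le_trans (topEll2_le_euclN hr2 0) ?_, by simp⟩
    rw [euclN_zero]; exact zero_le_one
  have hKne : K.Nonempty := by
    refine ⟨∑ g, euclN (Pi.single g (x g) : Fin n → ℝ), n, fun g => Pi.single g (x g), ?_,
      Finset.univ_sum_single x, rfl⟩
    intro g
    refine le_trans (le_trans (Finset.card_le_card (show (Finset.univ.filter
      fun i => (Pi.single g (x g) : Fin n → ℝ) i ≠ 0) ⊆ {g} from ?_)) ?_) hr1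
    · intro i hi
      simp only [Finset.mem_filter, Finset.mem_univ, true_and] at hi
      rcases eq_or_ne i g with h | h
      · simp [h]
      · exact absurd (by simp [Pi.single_apply, h]) hi
    · simp
  have key : ∀ c1 ∈ D, ∀ c2 ∈ K, c1 ≤ c2 := by
    rintro c1 ⟨y, hy, rfl⟩ c2 ⟨N, v, hsupp, hsum, rfl⟩
    have swap : ∑ i, x i * y i = ∑ g, ∑ i, v g i * y i := by
      rw [← hsum]
      rw [show ∑ i, (∑ g, v g) i * y i = ∑ i, ∑ g, v g i * y i from
        Finset.sum_congr rfl (fun i _ => by rw [Finset.sum_apply, Finset.sum_mul])]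
      exact Finset.sum_comm
    rw [swap]
    apply Finset.sum_le_sum
    intro g _
    refine le_trans (pairing_le (v g) y (hsupp g)) ?_
    have := mul_le_mul_of_nonneg_left hy (euclN_nonneg (v g))
    simpa using this
  obtain ⟨k0, hk0⟩ := hKne
  have hbddD : BddAbove D := ⟨k0, fun c1 h1 => key c1 h1 k0 hk0⟩
  have hbddK : BddBelow K := by
    refine ⟨0, ?_⟩
    rintro c2 ⟨N, v, _, _, rfl⟩
    exact Finset.sum_nonneg fun g _ => euclN_nonneg _
  have hDne : D.Nonempty := ⟨0, h0D⟩
  rw [dualVec, ksup, ← hD, ← hK]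
  apply le_antisymm
  · exact csSup_le hDne (fun c1 h1 => le_csInf ⟨k0, hk0⟩ (fun c2 h2 => key c1 h1 c2 h2))
  · set s := sSup D with hs
    have hs0 : 0 ≤ s := le_csSup hbddD h0D
    suffices h : ∃ c ∈ K, c ≤ s by
      obtain ⟨c, hcK, hcs⟩ := h
      exact le_trans (csInf_le hbddK hcK) hcs
    rcases eq_or_lt_of_le hs0 with hseq | hspos
    · -- s = 0 : then x = 0
      have hx0 : x = 0 := by
        funext i
        have lem : ∀ c : ℝ, |c| ≤ 1 → x i * c ≤ s := by
          intro c hc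
          have hmemD : (x i * c) ∈ D := by
            refine ⟨Pi.single i c, ?_, (sum_single_pair x i c).symm⟩
            refine le_trans (topEll2_le_euclN hr2 _) ?_
            rw [euclN_single]; exact hc
          exact le_csSup hbddD hmemD
        have h1 := lem 1 (by norm_num)
        have h2 := lem (-1) (by norm_num)
        rw [← hseq] at h1 h2
        show x i = (0 : Fin n → ℝ) i
        simp only [Pi.zero_apply]
        nlinarith
      refine ⟨0, ⟨0, fun g => g.elim0, fun g => g.elim0, ?_, by simp⟩, hs0⟩
      rw [hx0]
      simp
    · -- s > 0
      set A : Set (Fin n → ℝ) := {v | suppCard v ≤ r ∧ euclN v ≤ 1} with hA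
      have hcpt : IsCompact (convexHull ℝ A) := atoms_hull_isCompact
      have hconv : Convex ℝ (convexHull ℝ A) := convex_convexHull ℝ A
      have hclosed : IsClosed (convexHull ℝ A) := hcpt.isClosed
      have h0A : (0 : Fin n → ℝ) ∈ A := by
        refine ⟨by simp [suppCard], ?_⟩
        rw [euclN_zero]; exact zero_le_one
      have hxs : s⁻¹ • x ∈ convexHull ℝ A := by
        by_contra hmem
        obtain ⟨f, u, hfu, hux⟩ := geometric_hahn_banach_closed_point hconv hclosed hmem
        set z : Fin n → ℝ := fun i => f (Pi.single i 1) with hz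
        have hrep : ∀ w : Fin n → ℝ, f w = ∑ i, w i * z i := fun w => clm_repr f w
        have hu0 : 0 < u := by
          have := hfu 0 (subset_convexHull ℝ A h0A)
          simpa using this
        have htz : topEll2 r z < u := by
          obtain ⟨v, hv1, hv2, hv3⟩ := exists_attain hr2 z
          have := hfu v (subset_convexHull ℝ A ⟨hv1, hv2⟩)
          rw [hrep v] at this
          rw [← hv3]; exact this
        set y : Fin n → ℝ := u⁻¹ • z with hy
        have hyz : ∀ i, y i = u⁻¹ * z i := fun i => rfl
        have hty : topEll2 r y ≤ 1 := by
          obtain ⟨v', h1', h2', h3'⟩ := exists_attain hr2 y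
          rw [← h3']
          have e1 : ∑ i, v' i * y i = u⁻¹ * ∑ i, v' i * z i := by
            rw [Finset.mul_sum]
            exact Finset.sum_congr rfl (fun i _ => by rw [hyz]; ring)
          rw [e1, ← hrep v']
          have hfv' : f v' < u := hfu v' (subset_convexHull ℝ A ⟨h1', h2'⟩)
          calc u⁻¹ * f v' ≤ u⁻¹ * u :=
                mul_le_mul_of_nonneg_left (le_of_lt hfv') (inv_nonneg.mpr hu0.le)
            _ = 1 := inv_mul_cancel₀ hu0.ne'
        have hcle : (∑ i, x i * y i) ≤ s := le_csSup hbddD ⟨y, hty, rfl⟩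
        set T := ∑ i, x i * z i with hT
        have hfx : f (s⁻¹ • x) = s⁻¹ * T := by
          rw [hrep, hT, Finset.mul_sum]
          exact Finset.sum_congr rfl (fun i _ => by
            show (s⁻¹ • x) i * z i = s⁻¹ * (x i * z i)
            simp [mul_assoc])
        rw [hfx] at hux
        have hTus : u * s < T := by
          have h1 : s * u < s * (s⁻¹ * T) := mul_lt_mul_of_pos_left hux hspos
          rw [← mul_assoc, mul_inv_cancel₀ hspos.ne', one_mul] at h1
          linarith [mul_comm u s]
        have hyx : ∑ i, x i * y i = u⁻¹ * T := by
          rw [hT, Finset.mul_sum]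
          exact Finset.sum_congr rfl (fun i _ => by rw [hyz]; ring)
        have hcontra : s < ∑ i, x i * y i := by
          rw [hyx]
          have h2 := mul_lt_mul_of_pos_left hTus (inv_pos.mpr hu0)
          rw [← mul_assoc, inv_mul_cancel₀ hu0.ne', one_mul] at h2
          exact h2
        linarith
      rw [_root_.convexHull_eq] at hxs
      obtain ⟨ι, tset, w, zf, hw0, hw1, hzA, hcm⟩ := hxs
      rw [Finset.centerMass_eq_of_sum_1 _ _ hw1] at hcm
      have hxdecomp : ∑ i ∈ tset, (s * w i) • zf i = x := by
        have h3 := congrArg (fun v : Fin n → ℝ => s • v) hcm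
        rw [smul_inv_smul₀ hspos.ne'] at h3
        rw [← h3, Finset.smul_sum]
        exact Finset.sum_congr rfl (fun i _ => by rw [smul_smul])
      set N := tset.card with hN
      set e := tset.equivFin with he
      set v : Fin N → (Fin n → ℝ) :=
        fun g => (s * w ((e.symm g) : ι)) • zf ((e.symm g) : ι) with hv
      have hswap : ∀ {M : Type} [AddCommMonoid M] (F : ι → M),
          ∑ g : Fin N, F ((e.symm g : { a // a ∈ tset }) : ι) = ∑ i ∈ tset, F i := by
        intro M _ F
        calc ∑ g : Fin N, F ((e.symm g : { a // a ∈ tset }) : ι)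
            = ∑ i : { a // a ∈ tset }, F (i : ι) :=
              Equiv.sum_comp e.symm (fun i : { a // a ∈ tset } => F (i : ι))
          _ = ∑ i ∈ tset, F i := Finset.sum_coe_sort tset F
      have hsum_v : ∑ g, v g = x := by
        rw [← hxdecomp]
        exact hswap (fun i => (s * w i) • zf i)
      have hsupp_v : ∀ g, suppCard (v g) ≤ r :=
        fun g => le_trans (suppCard_smul_le _ _) (hzA _ (e.symm g).2).1
      have hcost : ∑ g, euclN (v g) ≤ s := by
        have h1 : ∑ g, euclN (v g) = ∑ i ∈ tset, euclN ((s * w i) • zf i) :=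
          hswap (fun i => euclN ((s * w i) • zf i))
        rw [h1]
        calc ∑ i ∈ tset, euclN ((s * w i) • zf i) ≤ ∑ i ∈ tset, s * w i := by
              apply Finset.sum_le_sum
              intro i hi
              rw [euclN_smul, abs_of_nonneg (mul_nonneg hs0 (hw0 i hi))]
              calc s * w i * euclN (zf i) ≤ s * w i * 1 :=
                    mul_le_mul_of_nonneg_left (hzA i hi).2 (mul_nonneg hs0 (hw0 i hi))
                _ = s * w i := mul_one _
          _ = s * ∑ i ∈ tset, w i := by rw [Finset.mul_sum]
          _ = s := by rw [hw1, mul_one]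
      exact ⟨∑ g, euclN (v g), ⟨N, v, hsupp_v, hsum_v, rfl⟩, hcost⟩
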